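/- arXiv:2410.21124 — 2 statements merged into one kernel-verified Lean document; each statement's English description precedes it below -/
import Mathlib

section
/- Let J be the Choi matrix of a quantum channel from a finite-dimensional system A to a finite-dimensional system B, and let M ≥ 1 be a real number. Then suc^MC(J, M) equals the supremum over quantum states ρ on R ≅ A and matrices O on R × B with 0 ≼ O ≼ I such that Tr[(ρ ⊗ σ)·O] ≤ 1/M for every quantum state σ on B, of Tr[(ρ^{1/2} ⊗ I_B)·J·(ρ^{1/2} ⊗ I_B) · O]. -/
open Matrix Kronecker Filter ComplexOrder

namespace QCoding

/-- Partial trace over the first tensor factor. -/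
noncomputable def trFst {R B : Type*} [Fintype R]
    (Λ : Matrix (R × B) (R × B) ℂ) : Matrix B B ℂ :=
  fun b b' => ∑ r, Λ (r, b) (r, b')

/-- Partial trace over the second tensor factor. -/
noncomputable def trSnd {R B : Type*} [Fintype B]
    (Λ : Matrix (R × B) (R × B) ℂ) : Matrix R R ℂ :=
  fun r r' => ∑ b, Λ (r, b) (r', b)

/-- A quantum state: positive semidefinite with unit trace. -/
def IsState {n : Type*} [Fintype n] (ρ : Matrix n n ℂ) : Prop :=
  ρ.PosSemidef ∧ ρ.trace = 1

/-- A Choi matrix of a quantum channel: positive semidefinite with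
partial trace over the output system equal to the identity. -/
def IsChoi {A B : Type*} [Fintype A] [Fintype B] [DecidableEq A]
    (J : Matrix (A × B) (A × B) ℂ) : Prop :=
  J.PosSemidef ∧ trSnd J = 1

/-- The non-signaling success probability: supremum of `(1/M) Tr[Λ J]` over states `ρ`
and `Λ` with `0 ≼ Λ ≼ M (ρ ⊗ I_B)` and `Tr_R Λ = I_B`. -/
noncomputable def sucNS {A B : Type*} [Fintype A] [Fintype B] [DecidableEq B]
    (J : Matrix (A × B) (A × B) ℂ) (M : ℝ) : ℝ :=
  sSup {x | ∃ ρ : Matrix A A ℂ, ∃ Λ : Matrix (A × B) (A × B) ℂ,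
    IsState ρ ∧ Λ.PosSemidef ∧
    ((M : ℂ) • (ρ ⊗ₖ (1 : Matrix B B ℂ)) - Λ).PosSemidef ∧
    trFst Λ = 1 ∧ x = (1 / M) * (Λ * J).trace.re}

/-- The meta-converse success probability: as `sucNS` but with `Tr_R Λ ≼ I_B`. -/
noncomputable def sucMC {A B : Type*} [Fintype A] [Fintype B] [DecidableEq B]
    (J : Matrix (A × B) (A × B) ℂ) (M : ℝ) : ℝ :=
  sSup {x | ∃ ρ : Matrix A A ℂ, ∃ Λ : Matrix (A × B) (A × B) ℂ,
    IsState ρ ∧ Λ.PosSemidef ∧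
    ((M : ℂ) • (ρ ⊗ₖ (1 : Matrix B B ℂ)) - Λ).PosSemidef ∧
    ((1 : Matrix B B ℂ) - trFst Λ).PosSemidef ∧
    x = (1 / M) * (Λ * J).trace.re}

/-- The fixed-input non-signaling success probability: supremum of `Tr[Λ J]` over `Λ`
with `0 ≼ Λ ≼ ρ ⊗ I_B` and `Tr_R Λ = (1/M) I_B`. -/
noncomputable def sucNSFixed {A B : Type*} [Fintype A] [Fintype B] [DecidableEq B]
    (J : Matrix (A × B) (A × B) ℂ) (M : ℝ) (ρ : Matrix A A ℂ) : ℝ :=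
  sSup {x | ∃ Λ : Matrix (A × B) (A × B) ℂ, Λ.PosSemidef ∧
    ((ρ ⊗ₖ (1 : Matrix B B ℂ)) - Λ).PosSemidef ∧
    trFst Λ = ((1 / M : ℂ)) • (1 : Matrix B B ℂ) ∧
    x = (Λ * J).trace.re}

/-- Apply a real function spectrally to a Hermitian matrix (junk value `0` otherwise). -/
noncomputable def hermApply {n : Type*} [Fintype n] [DecidableEq n]
    (H : Matrix n n ℂ) (f : ℝ → ℝ) : Matrix n n ℂ :=
  if h : H.IsHermitian then
    (h.eigenvectorUnitary : Matrix n n ℂ) *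
      Matrix.diagonal (fun i => (f (h.eigenvalues i) : ℂ)) *
      (star (h.eigenvectorUnitary : Matrix n n ℂ))
  else 0

/-- Real (spectral) power of a positive semidefinite matrix, with the Moore-Penrose
convention: for `p ≠ 0` the eigenvalue `0` is mapped to `(0:ℝ) ^ p = 0`.
In particular `matRPow ρ (1/2)` is the positive semidefinite square root of `ρ` and
`matRPow ρ (-(1/2))` is the Moore-Penrose pseudo-inverse of that square root. -/
noncomputable def matRPow {n : Type*} [Fintype n] [DecidableEq n]
    (H : Matrix n n ℂ) (p : ℝ) : Matrix n n ℂ :=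
  hermApply H (fun x => x ^ p)

/-- Positive part of a Hermitian matrix: each eigenvalue `λ` is replaced by `max λ 0`. -/
noncomputable def posPart {n : Type*} [Fintype n] [DecidableEq n]
    (H : Matrix n n ℂ) : Matrix n n ℂ :=
  hermApply H (fun x => max x 0)

/-- Support inclusion for positive semidefinite matrices: the kernel of `σ` is
contained in the kernel of `ρ`, i.e. the support of `ρ` is contained in that of `σ`. -/
def SuppLe {n : Type*} [Fintype n] (ρ σ : Matrix n n ℂ) : Prop :=
  ∀ v : n → ℂ, σ.mulVec v = 0 → ρ.mulVec v = 0

/-- The sandwiched Rényi divergence of order `α` (finite-value formula, meaningful when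
the support of `ρ` is contained in that of `σ`). -/
noncomputable def sandDiv {n : Type*} [Fintype n] [DecidableEq n]
    (α : ℝ) (ρ σ : Matrix n n ℂ) : ℝ :=
  (α - 1)⁻¹ * Real.log
    ((matRPow (matRPow σ ((1 - α) / (2 * α)) * ρ * matRPow σ ((1 - α) / (2 * α))) α).trace.re)

/-- The channel's sandwiched Rényi mutual information of order `α`:
`sup_ρ inf_σ D̃_α((ρ^{1/2} ⊗ I_B) J (ρ^{1/2} ⊗ I_B) ‖ ρ ⊗ σ)`, the infimum being
restricted to those `σ` for which the support condition holds (the divergence is `+∞`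
otherwise, so such `σ` never contribute to the infimum). -/
noncomputable def sandMI {A B : Type*} [Fintype A] [Fintype B] [DecidableEq A] [DecidableEq B]
    (α : ℝ) (J : Matrix (A × B) (A × B) ℂ) : ℝ :=
  sSup {x | ∃ ρ : Matrix A A ℂ, IsState ρ ∧
    x = sInf {y | ∃ σ : Matrix B B ℂ, IsState σ ∧
      SuppLe ((matRPow ρ (1/2) ⊗ₖ (1 : Matrix B B ℂ)) * J *
          (matRPow ρ (1/2) ⊗ₖ (1 : Matrix B B ℂ))) (ρ ⊗ₖ σ) ∧
      y = sandDiv α ((matRPow ρ (1/2) ⊗ₖ (1 : Matrix B B ℂ)) * J *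
          (matRPow ρ (1/2) ⊗ₖ (1 : Matrix B B ℂ))) (ρ ⊗ₖ σ)}}

/-- Choi matrix of the `n`-fold tensor power channel. -/
noncomputable def choiPow {A B : Type*} (J : Matrix (A × B) (A × B) ℂ) (n : ℕ) :
    Matrix ((Fin n → A) × (Fin n → B)) ((Fin n → A) × (Fin n → B)) ℂ :=
  fun p q => ∏ k : Fin n, J (p.1 k, p.2 k) (q.1 k, q.2 k)

/-- Action of the channel with Choi matrix `C` (from `S` to `T`) on the first tensor
factor of a bipartite matrix on `S × E`. -/
noncomputable def chanApply {S T E : Type*} [Fintype S]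
    (C : Matrix (S × T) (S × T) ℂ) (X : Matrix (S × E) (S × E) ℂ) :
    Matrix (T × E) (T × E) ℂ :=
  fun p q => ∑ s : S, ∑ s' : S, C (s, p.1) (s', q.1) * X (s, p.2) (s', q.2)

/-- The entanglement-assisted success probability for `M` messages: supremum over a
shared pure entangled state `ψ` on `Fin d × Fin d`, encoding channels `K m` from `E_A`
to `A` (Choi matrices), and a POVM `Ξ` on `B × E_B`, of the average probability of
correct decoding. -/
noncomputable def sucEA {A B : Type*} [Fintype A] [Fintype B] [DecidableEq B]
    (J : Matrix (A × B) (A × B) ℂ) (M : ℕ) : ℝ :=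
  sSup {x | ∃ d : ℕ, 1 ≤ d ∧
    ∃ ψ : Fin d × Fin d → ℂ, (∑ i, Complex.normSq (ψ i)) = 1 ∧
    ∃ K : Fin M → Matrix (Fin d × A) (Fin d × A) ℂ,
      (∀ m, (K m).PosSemidef ∧ trSnd (K m) = 1) ∧
    ∃ Ξ : Fin M → Matrix (B × Fin d) (B × Fin d) ℂ,
      (∀ m, (Ξ m).PosSemidef) ∧ (∑ m, Ξ m) = 1 ∧
      x = (1 / (M : ℝ)) *
        ∑ m, ((Ξ m) * chanApply J (chanApply (K m) (Matrix.vecMulVec ψ (star ψ)))).trace.re}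


section AuxHerm
variable {n : Type*} [Fintype n] [DecidableEq n]

lemma hermApply_eq {H : Matrix n n ℂ} (h : H.IsHermitian) (f : ℝ → ℝ) :
    hermApply H f = (h.eigenvectorUnitary : Matrix n n ℂ) *
      Matrix.diagonal (fun i => (f (h.eigenvalues i) : ℂ)) *
      (star (h.eigenvectorUnitary : Matrix n n ℂ)) := dif_pos h

lemma hermApply_isHermitian {H : Matrix n n ℂ} (h : H.IsHermitian) (f : ℝ → ℝ) :
    (hermApply H f).IsHermitian := by
  rw [hermApply_eq h]
  have hd : (Matrix.diagonal (fun i => (f (h.eigenvalues i) : ℂ)))ᴴ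
      = Matrix.diagonal (fun i => (f (h.eigenvalues i) : ℂ)) := by
    ext i j
    by_cases hij : i = j
    · subst hij; simp [Matrix.diagonal_apply_eq, Complex.conj_ofReal]
    · simp [Matrix.diagonal_apply_ne _ hij, Matrix.diagonal_apply_ne _ (Ne.symm hij), hij]
  unfold Matrix.IsHermitian
  simp only [conjTranspose_mul, star_eq_conjTranspose, conjTranspose_conjTranspose, hd]
  rw [Matrix.mul_assoc]

lemma hermApply_mul {H : Matrix n n ℂ} (h : H.IsHermitian) (f g : ℝ → ℝ) :
    hermApply H f * hermApply H g = hermApply H (fun x => f x * g x) := by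
  have hU : (star (h.eigenvectorUnitary : Matrix n n ℂ)) * (h.eigenvectorUnitary : Matrix n n ℂ) = 1 :=
    Unitary.coe_star_mul_self h.eigenvectorUnitary
  rw [hermApply_eq h, hermApply_eq h, hermApply_eq h]
  calc ((h.eigenvectorUnitary : Matrix n n ℂ) * Matrix.diagonal (fun i => (f (h.eigenvalues i) : ℂ)) * (star (h.eigenvectorUnitary : Matrix n n ℂ)))
      * ((h.eigenvectorUnitary : Matrix n n ℂ) * Matrix.diagonal (fun i => (g (h.eigenvalues i) : ℂ)) * (star (h.eigenvectorUnitary : Matrix n n ℂ)))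
      = (h.eigenvectorUnitary : Matrix n n ℂ) * (Matrix.diagonal (fun i => (f (h.eigenvalues i) : ℂ)) * ((star (h.eigenvectorUnitary : Matrix n n ℂ)) * (h.eigenvectorUnitary : Matrix n n ℂ)) * Matrix.diagonal (fun i => (g (h.eigenvalues i) : ℂ))) * (star (h.eigenvectorUnitary : Matrix n n ℂ)) := by
        simp only [Matrix.mul_assoc]
    _ = (h.eigenvectorUnitary : Matrix n n ℂ) * Matrix.diagonal (fun i => ((f (h.eigenvalues i) * g (h.eigenvalues i) : ℝ) : ℂ)) * (star (h.eigenvectorUnitary : Matrix n n ℂ)) := by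
        rw [hU, Matrix.mul_one, diagonal_mul_diagonal]
        congr 2
        funext i
        push_cast
        ring

lemma hermApply_congr {H : Matrix n n ℂ} (h : H.IsHermitian) {f g : ℝ → ℝ}
    (hfg : ∀ i, f (h.eigenvalues i) = g (h.eigenvalues i)) :
    hermApply H f = hermApply H g := by
  rw [hermApply_eq h, hermApply_eq h]
  have : (fun i => (f (h.eigenvalues i) : ℂ)) = (fun i => (g (h.eigenvalues i) : ℂ)) :=
    funext fun i => by rw [hfg i]
  rw [this]

lemma hermApply_id {H : Matrix n n ℂ} (h : H.IsHermitian) :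
    hermApply H (fun x => x) = H := by
  rw [hermApply_eq h]
  exact h.spectral_theorem.symm

lemma hermApply_one {H : Matrix n n ℂ} (h : H.IsHermitian) :
    hermApply H (fun _ => 1) = 1 := by
  rw [hermApply_eq h]
  have : (Matrix.diagonal (fun i : n => ((1 : ℝ) : ℂ))) = 1 := by
    simp [Matrix.diagonal_one]
  rw [this, Matrix.mul_one]
  exact Unitary.coe_mul_star_self h.eigenvectorUnitary

lemma hermApply_posSemidef {H : Matrix n n ℂ} (hH : H.PosSemidef) {f : ℝ → ℝ}
    (hf : ∀ x, 0 ≤ x → 0 ≤ f x) : (hermApply H f).PosSemidef := by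
  rw [hermApply_eq hH.1]
  have hd : (Matrix.diagonal (fun i => (f (hH.1.eigenvalues i) : ℂ))).PosSemidef := by
    refine posSemidef_diagonal_iff.mpr fun i => ?_
    have := hf _ (hH.eigenvalues_nonneg i)
    exact Complex.zero_le_real.mpr this
  simpa [star_eq_conjTranspose] using hd.mul_mul_conjTranspose_same
    (hH.1.eigenvectorUnitary : Matrix n n ℂ)

lemma hermApply_sub {H : Matrix n n ℂ} (h : H.IsHermitian) (f g : ℝ → ℝ) :
    hermApply H f - hermApply H g = hermApply H (fun x => f x - g x) := by
  rw [hermApply_eq h, hermApply_eq h, hermApply_eq h, ← Matrix.sub_mul, ← Matrix.mul_sub,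
    diagonal_sub]
  simp only [Pi.sub_apply, Complex.ofReal_sub]


/-- The (orthogonal) projection onto the support of a Hermitian matrix. -/
noncomputable def projOf (ρ : Matrix n n ℂ) : Matrix n n ℂ :=
  hermApply ρ (fun x => if x = 0 then 0 else 1)

section RPow
variable {ρ : Matrix n n ℂ} (hρ : ρ.PosSemidef)
include hρ

lemma sqrt_mul_sqrt : matRPow ρ (1/2) * matRPow ρ (1/2) = ρ := by
  unfold matRPow
  rw [hermApply_mul hρ.1, show (fun x : ℝ => x ^ (1/2 : ℝ) * x ^ (1/2 : ℝ)) = fun x : ℝ => x ^ (1/2 : ℝ) * x ^ (1/2 : ℝ) from rfl]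
  rw [hermApply_congr hρ.1 (g := fun x => x), hermApply_id hρ.1]
  intro i
  have h0 := hρ.eigenvalues_nonneg i
  rw [← Real.rpow_add' h0 (by norm_num)]
  norm_num

lemma sqrt_isHermitian : (matRPow ρ (1/2)).IsHermitian := hermApply_isHermitian hρ.1 _

lemma isqrt_isHermitian : (matRPow ρ (-(1/2))).IsHermitian := hermApply_isHermitian hρ.1 _

lemma sqrt_posSemidef : (matRPow ρ (1/2)).PosSemidef :=
  hermApply_posSemidef hρ fun x hx => Real.rpow_nonneg hx _

lemma projOf_isHermitian : (projOf ρ).IsHermitian := hermApply_isHermitian hρ.1 _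

lemma sqrt_mul_isqrt : matRPow ρ (1/2) * matRPow ρ (-(1/2)) = projOf ρ := by
  unfold matRPow projOf
  rw [hermApply_mul hρ.1]
  refine hermApply_congr hρ.1 fun i => ?_
  have h0 := hρ.eigenvalues_nonneg i
  rcases eq_or_lt_of_le h0 with h | h
  · simp [← h, Real.zero_rpow (by norm_num : (1/2 : ℝ) ≠ 0)]
  · rw [← Real.rpow_add h, if_neg (ne_of_gt h)]
    norm_num

lemma isqrt_mul_sqrt : matRPow ρ (-(1/2)) * matRPow ρ (1/2) = projOf ρ := by
  unfold matRPow projOf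
  rw [hermApply_mul hρ.1]
  refine hermApply_congr hρ.1 fun i => ?_
  have h0 := hρ.eigenvalues_nonneg i
  rcases eq_or_lt_of_le h0 with h | h
  · simp [← h, Real.zero_rpow (by norm_num : (1/2 : ℝ) ≠ 0)]
  · rw [← Real.rpow_add h, if_neg (ne_of_gt h)]
    norm_num

lemma mul_projOf_self : ρ * projOf ρ = ρ := by
  unfold projOf
  nth_rewrite 1 [← hermApply_id hρ.1]
  rw [hermApply_mul hρ.1]
  rw [hermApply_congr hρ.1 (g := fun x => x), hermApply_id hρ.1]
  intro i
  by_cases h : hρ.1.eigenvalues i = 0 <;> simp [h]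

lemma isqrt_mul_mul_isqrt : matRPow ρ (-(1/2)) * ρ * matRPow ρ (-(1/2)) = projOf ρ := by
  unfold matRPow projOf
  nth_rewrite 2 [← hermApply_id hρ.1]
  rw [hermApply_mul hρ.1, hermApply_mul hρ.1]
  refine hermApply_congr hρ.1 fun i => ?_
  have h0 := hρ.eigenvalues_nonneg i
  rcases eq_or_lt_of_le h0 with h | h
  · simp [← h, Real.zero_rpow (by norm_num : (-(1/2) : ℝ) ≠ 0)]
  · rw [if_neg (ne_of_gt h)]
    rw [show hρ.1.eigenvalues i ^ (-(1/2):ℝ) * hρ.1.eigenvalues i = hρ.1.eigenvalues i ^ (-(1/2):ℝ) * hρ.1.eigenvalues i ^ (1:ℝ) from by rw [Real.rpow_one]]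
    rw [← Real.rpow_add h, ← Real.rpow_add h]
    norm_num

lemma one_sub_projOf_posSemidef : ((1 : Matrix n n ℂ) - projOf ρ).PosSemidef := by
  rw [show (1 : Matrix n n ℂ) = hermApply ρ (fun _ => 1) from (hermApply_one hρ.1).symm]
  unfold projOf
  rw [hermApply_sub hρ.1]
  exact hermApply_posSemidef hρ fun x hx => by split <;> norm_num

end RPow

lemma posSemidef_real_smul {X : Matrix n n ℂ} (hX : X.PosSemidef) {c : ℝ} (hc : 0 ≤ c) :
    (((c : ℂ)) • X).PosSemidef := by
  refine Matrix.PosSemidef.of_dotProduct_mulVec_nonneg ?_ ?_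
  · unfold Matrix.IsHermitian
    rw [conjTranspose_smul, hX.1.eq, Complex.star_def, Complex.conj_ofReal]
  · intro v
    rw [Matrix.smul_mulVec, dotProduct_smul, smul_eq_mul]
    exact mul_nonneg (Complex.zero_le_real.mpr hc) (hX.dotProduct_mulVec_nonneg v)

lemma psd_diag_nonneg {X : Matrix n n ℂ} (hX : X.PosSemidef) (i : n) :
    0 ≤ X i i := by
  have := hX.dotProduct_mulVec_nonneg (Pi.single i 1)
  simpa [dotProduct, Pi.single_apply, mulVec, Finset.sum_ite_eq] using this

lemma psd_trace_re_nonneg {X : Matrix n n ℂ} (hX : X.PosSemidef) : 0 ≤ X.trace.re := by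
  have h : (0 : ℂ) ≤ X.trace := Finset.sum_nonneg fun i _ => psd_diag_nonneg hX i
  exact (Complex.le_def.mp h).1

open scoped MatrixOrder in
lemma posSemidef_iff_eq_transpose_mul_self {X : Matrix n n ℂ} :
    X.PosSemidef ↔ ∃ C : Matrix n n ℂ, X = Cᴴ * C := by
  constructor
  · intro h
    obtain ⟨C, hC⟩ := CStarAlgebra.nonneg_iff_eq_star_mul_self.mp h.nonneg
    exact ⟨C, hC⟩
  · rintro ⟨C, rfl⟩
    exact posSemidef_conjTranspose_mul_self C

lemma trace_mul_psd_re_nonneg {σ X : Matrix n n ℂ} (hσ : σ.PosSemidef) (hX : X.PosSemidef) :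
    0 ≤ ((σ * X).trace).re := by
  obtain ⟨C, rfl⟩ := posSemidef_iff_eq_transpose_mul_self.mp hσ
  rw [Matrix.mul_assoc, trace_mul_comm]
  exact psd_trace_re_nonneg (hX.mul_mul_conjTranspose_same C)

lemma trace_mul_le_one_of_one_sub {σ K : Matrix n n ℂ} (hσ : IsState σ)
    (hK1 : ((1 : Matrix n n ℂ) - K).PosSemidef) : ((σ * K).trace).re ≤ 1 := by
  have h0 := trace_mul_psd_re_nonneg hσ.1 hK1
  have he : (σ * ((1 : Matrix n n ℂ) - K)).trace = 1 - (σ * K).trace := by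
    rw [Matrix.mul_sub, Matrix.mul_one, trace_sub, hσ.2]
  rw [he] at h0
  simp only [Complex.sub_re, Complex.one_re] at h0
  linarith

lemma trace_vecMulVec_mul (v : n → ℂ) (K : Matrix n n ℂ) :
    (Matrix.vecMulVec v (star v) * K).trace = star v ⬝ᵥ K *ᵥ v := by
  simp only [Matrix.trace, Matrix.diag, Matrix.mul_apply, Matrix.vecMulVec_apply,
    dotProduct, Matrix.mulVec, Pi.star_apply]
  rw [Finset.sum_comm]
  refine Finset.sum_congr rfl fun i _ => ?_
  rw [Finset.mul_sum]
  refine Finset.sum_congr rfl fun j _ => ?_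
  ring

lemma vecMulVec_posSemidef (v : n → ℂ) : (Matrix.vecMulVec v (star v)).PosSemidef := by
  rw [Matrix.vecMulVec_eq Unit, ← Matrix.conjTranspose_replicateCol]
  exact posSemidef_self_mul_conjTranspose _

lemma vecMulVec_trace (v : n → ℂ) :
    (Matrix.vecMulVec v (star v)).trace = ((∑ i, Complex.normSq (v i) : ℝ) : ℂ) := by
  simp [Matrix.trace, Matrix.diag, Matrix.vecMulVec_apply, Complex.mul_conj]

lemma dotProduct_star_self (v : n → ℂ) :
    star v ⬝ᵥ v = ((∑ i, Complex.normSq (v i) : ℝ) : ℂ) := by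
  simp [dotProduct, Complex.normSq_eq_conj_mul_self]

/-- If `K` is PSD and `Tr[σ K] ≤ c` for every state `σ`, then `K ≼ c·1`. -/
lemma smul_one_sub_posSemidef {K : Matrix n n ℂ} (hK : K.PosSemidef) {c : ℝ}
    (h : ∀ σ : Matrix n n ℂ, IsState σ → ((σ * K).trace).re ≤ c) :
    ((c : ℂ) • (1 : Matrix n n ℂ) - K).PosSemidef := by
  refine Matrix.PosSemidef.of_dotProduct_mulVec_nonneg ?_ ?_
  · unfold Matrix.IsHermitian
    rw [conjTranspose_sub, conjTranspose_smul, conjTranspose_one, hK.1.eq,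
      Complex.star_def, Complex.conj_ofReal]
  · intro v
    by_cases hv : v = 0
    · simp [hv]
    have ht0 : 0 < ∑ i, Complex.normSq (v i) := by
      obtain ⟨i, hi⟩ := Function.ne_iff.mp hv
      exact Finset.sum_pos' (fun j _ => Complex.normSq_nonneg _)
        ⟨i, Finset.mem_univ i, by simpa [Complex.normSq_pos] using hi⟩
    set t : ℝ := ∑ i, Complex.normSq (v i) with ht
    set r : ℝ := (Real.sqrt t)⁻¹ with hr
    have hrt : r ^ 2 * t = 1 := by
      rw [hr, inv_pow, Real.sq_sqrt ht0.le]
      field_simp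
    set w : n → ℂ := fun i => (r : ℂ) * v i with hw
    have hwv : Matrix.vecMulVec w (star w) = ((r ^ 2 : ℝ) : ℂ) • Matrix.vecMulVec v (star v) := by
      ext i j
      simp only [Matrix.vecMulVec_apply, hw, Pi.star_apply, star_mul', Complex.star_def,
        Complex.conj_ofReal, Matrix.smul_apply, smul_eq_mul]
      push_cast
      ring
    have hstate : IsState (Matrix.vecMulVec w (star w)) := by
      refine ⟨vecMulVec_posSemidef w, ?_⟩
      rw [hwv, trace_smul, smul_eq_mul, vecMulVec_trace, ← ht, ← Complex.ofReal_mul, hrt]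
      norm_num
    have hq := h _ hstate
    rw [hwv, Matrix.smul_mul, trace_smul, smul_eq_mul, trace_vecMulVec_mul,
      Complex.re_ofReal_mul] at hq
    -- hq : r^2 * (star v ⬝ᵥ K *ᵥ v).re ≤ c
    have hKq := hK.dotProduct_mulVec_nonneg v
    have him : (star v ⬝ᵥ K *ᵥ v).im = 0 := ((Complex.le_def.mp hKq).2).symm
    have hre : 0 ≤ (star v ⬝ᵥ K *ᵥ v).re := (Complex.le_def.mp hKq).1
    have hre2 : (star v ⬝ᵥ K *ᵥ v).re ≤ c * t := by
      have h2 : r ^ 2 = t⁻¹ := by rw [hr, inv_pow, Real.sq_sqrt ht0.le]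
      rw [h2] at hq
      calc (star v ⬝ᵥ K *ᵥ v).re = t * (t⁻¹ * (star v ⬝ᵥ K *ᵥ v).re) := by
            field_simp
        _ ≤ t * c := by
            exact mul_le_mul_of_nonneg_left hq ht0.le
        _ = c * t := mul_comm _ _
    have hexp : star v ⬝ᵥ ((c : ℂ) • (1 : Matrix n n ℂ) - K) *ᵥ v
        = (c : ℂ) * (t : ℂ) - star v ⬝ᵥ K *ᵥ v := by
      rw [Matrix.sub_mulVec, dotProduct_sub, Matrix.smul_mulVec, Matrix.one_mulVec,
        dotProduct_smul, smul_eq_mul, dotProduct_star_self, ← ht]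
    rw [hexp, show (c : ℂ) * (t : ℂ) = ((c * t : ℝ) : ℂ) from by push_cast; ring,
      Complex.le_def]
    constructor
    · simp only [Complex.sub_re, Complex.zero_re, Complex.ofReal_re]
      linarith
    · simp [Complex.sub_im, Complex.ofReal_im, him]

/-- Support lemma: if `0 ≼ Λ ≼ C` and `C (1 - P) = 0` with `P` Hermitian,
then `P Λ P = Λ`. -/
lemma conj_proj_eq {Λ C P : Matrix n n ℂ} (hΛ : Λ.PosSemidef) (hCΛ : (C - Λ).PosSemidef)
    (hP : P.IsHermitian) (hC : C * ((1 : Matrix n n ℂ) - P) = 0) : P * Λ * P = Λ := by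
  obtain ⟨Y, hY⟩ := posSemidef_iff_eq_transpose_mul_self.mp hΛ
  set Q : Matrix n n ℂ := 1 - P with hQ
  have hQH : Qᴴ = Q := by rw [hQ, conjTranspose_sub, conjTranspose_one, hP.eq]
  have h1 : Qᴴ * (C - Λ) * Q = -(Qᴴ * Λ * Q) := by
    rw [hQH]
    have he : Q * (C - Λ) * Q = Q * (C * Q) - Q * Λ * Q := by noncomm_ring
    rw [he, hC, Matrix.mul_zero, zero_sub]
  have h3 : Y * Q = 0 := by
    have hzero : ∀ v : n → ℂ, (Y * Q) *ᵥ v = 0 := by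
      intro v
      have p1 : 0 ≤ star v ⬝ᵥ (Qᴴ * (C - Λ) * Q) *ᵥ v := (hCΛ.conjTranspose_mul_mul_same Q).dotProduct_mulVec_nonneg v
      have p2 : 0 ≤ star v ⬝ᵥ (Qᴴ * Λ * Q) *ᵥ v := (hΛ.conjTranspose_mul_mul_same Q).dotProduct_mulVec_nonneg v
      have hle : star v ⬝ᵥ (Qᴴ * Λ * Q) *ᵥ v ≤ 0 := by
        rw [h1, Matrix.neg_mulVec, dotProduct_neg] at p1
        exact neg_nonneg.mp p1
      have hq0 : star v ⬝ᵥ (Qᴴ * Λ * Q) *ᵥ v = 0 := le_antisymm hle p2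
      have h2 : Qᴴ * Λ * Q = (Y * Q)ᴴ * (Y * Q) := by
        rw [hY, conjTranspose_mul, hQH]
        simp only [Matrix.mul_assoc]
      rw [h2, ← Matrix.mulVec_mulVec, dotProduct_mulVec, ← Matrix.star_mulVec] at hq0
      exact dotProduct_star_self_eq_zero.mp hq0
    ext i j
    have := congrFun (hzero (Pi.single j 1)) i
    simpa using this
  have h5 : Y * P = Y := by
    have h4 : Y * (1 - P) = 0 := by rw [← hQ]; exact h3
    rw [Matrix.mul_sub, Matrix.mul_one, sub_eq_zero] at h4
    exact h4.symm
  have h6 : P * Λ * P = (Y * P)ᴴ * (Y * P) := by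
    rw [hY, conjTranspose_mul, hP.eq]
    simp only [Matrix.mul_assoc]
  rw [h6, h5]
  exact hY.symm


end AuxHerm

section AuxKron
variable {A B : Type*} [Fintype A] [Fintype B] [DecidableEq A] [DecidableEq B]

lemma conjTranspose_kron (X : Matrix A A ℂ) (Y : Matrix B B ℂ) :
    (X ⊗ₖ Y)ᴴ = Xᴴ ⊗ₖ Yᴴ := by
  ext ⟨i, j⟩ ⟨k, l⟩
  simp [conjTranspose_apply, kroneckerMap_apply, star_mul', mul_comm]

lemma kron_one_isHermitian {X : Matrix A A ℂ} (hX : X.IsHermitian) :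
    (X ⊗ₖ (1 : Matrix B B ℂ)).IsHermitian := by
  unfold Matrix.IsHermitian
  rw [conjTranspose_kron, hX.eq, conjTranspose_one]

lemma kron_one_posSemidef {X : Matrix A A ℂ} (hX : X.PosSemidef) :
    (X ⊗ₖ (1 : Matrix B B ℂ)).PosSemidef := by
  obtain ⟨C, rfl⟩ := posSemidef_iff_eq_transpose_mul_self.mp hX
  rw [show (Cᴴ * C) ⊗ₖ (1 : Matrix B B ℂ) = (C ⊗ₖ 1)ᴴ * (C ⊗ₖ 1) by
    rw [conjTranspose_kron, conjTranspose_one, ← mul_kronecker_mul, one_mul]]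
  exact posSemidef_conjTranspose_mul_self _

lemma sub_kron_one (X Y : Matrix A A ℂ) :
    (X - Y) ⊗ₖ (1 : Matrix B B ℂ) = X ⊗ₖ 1 - Y ⊗ₖ 1 := by
  ext ⟨i, j⟩ ⟨k, l⟩
  simp [kroneckerMap_apply, sub_mul]

/-- embedding matrix for the partial trace decomposition -/
private noncomputable def emb (r : A) : Matrix (A × B) B ℂ :=
  Matrix.of fun p b => if p = (r, b) then 1 else 0

lemma trFst_eq_sum (X : Matrix (A × B) (A × B) ℂ) :
    trFst X = ∑ r : A, (emb (B := B) r)ᴴ * X * emb (B := B) r := by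
  ext b b'
  simp only [trFst, Matrix.sum_apply, Matrix.mul_apply, emb, conjTranspose_apply, Matrix.of_apply]
  refine Finset.sum_congr rfl fun r _ => ?_
  simp [apply_ite (star : ℂ → ℂ), ite_mul, mul_ite, Finset.sum_ite_eq, Finset.sum_ite_eq']

lemma trFst_posSemidef {X : Matrix (A × B) (A × B) ℂ} (hX : X.PosSemidef) :
    (trFst X).PosSemidef := by
  rw [trFst_eq_sum]
  refine Finset.sum_induction _ _ (fun a b ha hb => ha.add hb) Matrix.PosSemidef.zero ?_
  exact fun r _ => hX.conjTranspose_mul_mul_same (emb r)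

lemma trace_one_kron_mul (σ : Matrix B B ℂ) (Y : Matrix (A × B) (A × B) ℂ) :
    (((1 : Matrix A A ℂ) ⊗ₖ σ) * Y).trace = (σ * trFst Y).trace := by
  trans ∑ a : A, ∑ b : B, ∑ b' : B, σ b b' * Y (a, b') (a, b)
  · simp only [Matrix.trace, Matrix.diag, Matrix.mul_apply, Fintype.sum_prod_type,
      kroneckerMap_apply, one_apply, ite_mul, one_mul, zero_mul]
    refine Finset.sum_congr rfl fun a _ => Finset.sum_congr rfl fun b _ => ?_
    rw [Finset.sum_comm]
    simp [Finset.sum_ite_eq, Finset.sum_ite_eq']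
  trans ∑ b : B, ∑ b' : B, ∑ a : A, σ b b' * Y (a, b') (a, b)
  · rw [Finset.sum_comm]
    exact Finset.sum_congr rfl fun b _ => Finset.sum_comm
  · simp only [Matrix.trace, Matrix.diag, Matrix.mul_apply, trFst, Finset.mul_sum]


variable {ρ : Matrix A A ℂ}

lemma kron_sq (hρ : ρ.PosSemidef) :
    (matRPow ρ (1/2) ⊗ₖ (1 : Matrix B B ℂ)) * (matRPow ρ (1/2) ⊗ₖ (1 : Matrix B B ℂ))
      = ρ ⊗ₖ (1 : Matrix B B ℂ) := by
  rw [← mul_kronecker_mul, sqrt_mul_sqrt hρ, Matrix.one_mul]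

lemma kron_SN (hρ : ρ.PosSemidef) :
    (matRPow ρ (1/2) ⊗ₖ (1 : Matrix B B ℂ)) * (matRPow ρ (-(1/2)) ⊗ₖ (1 : Matrix B B ℂ))
      = projOf ρ ⊗ₖ (1 : Matrix B B ℂ) := by
  rw [← mul_kronecker_mul, sqrt_mul_isqrt hρ, Matrix.one_mul]

lemma kron_NS (hρ : ρ.PosSemidef) :
    (matRPow ρ (-(1/2)) ⊗ₖ (1 : Matrix B B ℂ)) * (matRPow ρ (1/2) ⊗ₖ (1 : Matrix B B ℂ))
      = projOf ρ ⊗ₖ (1 : Matrix B B ℂ) := by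
  rw [← mul_kronecker_mul, isqrt_mul_sqrt hρ, Matrix.one_mul]

lemma kron_NrhoN (hρ : ρ.PosSemidef) :
    (matRPow ρ (-(1/2)) ⊗ₖ (1 : Matrix B B ℂ)) * (ρ ⊗ₖ (1 : Matrix B B ℂ))
      * (matRPow ρ (-(1/2)) ⊗ₖ (1 : Matrix B B ℂ)) = projOf ρ ⊗ₖ (1 : Matrix B B ℂ) := by
  rw [← mul_kronecker_mul, ← mul_kronecker_mul, isqrt_mul_mul_isqrt hρ, Matrix.one_mul,
    Matrix.one_mul]

lemma kron_rho_ann (hρ : ρ.PosSemidef) :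
    (ρ ⊗ₖ (1 : Matrix B B ℂ)) * ((1 : Matrix (A × B) (A × B) ℂ) - projOf ρ ⊗ₖ 1) = 0 := by
  rw [Matrix.mul_sub, Matrix.mul_one, ← mul_kronecker_mul, mul_projOf_self hρ, Matrix.one_mul,
    sub_self]

lemma kron_one_sub_proj_psd (hρ : ρ.PosSemidef) :
    ((1 : Matrix (A × B) (A × B) ℂ) - projOf ρ ⊗ₖ (1 : Matrix B B ℂ)).PosSemidef := by
  have h : (1 : Matrix (A × B) (A × B) ℂ) - projOf ρ ⊗ₖ (1 : Matrix B B ℂ)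
      = ((1 : Matrix A A ℂ) - projOf ρ) ⊗ₖ (1 : Matrix B B ℂ) := by
    rw [sub_kron_one, Matrix.one_kronecker_one]
  rw [h]
  exact kron_one_posSemidef (one_sub_projOf_posSemidef hρ)

lemma kron_factor (hρ : ρ.PosSemidef) (σ : Matrix B B ℂ) :
    (matRPow ρ (1/2) ⊗ₖ (1 : Matrix B B ℂ)) * ((1 : Matrix A A ℂ) ⊗ₖ σ)
      * (matRPow ρ (1/2) ⊗ₖ (1 : Matrix B B ℂ)) = ρ ⊗ₖ σ := by
  rw [← mul_kronecker_mul, ← mul_kronecker_mul]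
  simp only [Matrix.mul_one, Matrix.one_mul]
  rw [sqrt_mul_sqrt hρ]

lemma trace_sandwich {m : Type*} [Fintype m] (S X Y : Matrix m m ℂ) :
    ((S * X * S) * Y).trace = (X * (S * Y * S)).trace := by
  calc ((S * X * S) * Y).trace = (S * (X * S * Y)).trace := by simp only [Matrix.mul_assoc]
    _ = ((X * S * Y) * S).trace := trace_mul_comm _ _
    _ = (X * (S * Y * S)).trace := by simp only [Matrix.mul_assoc]

end AuxKron

/-- Hypothesis-testing formulation of the meta-converse success
probability (sup over states and tests with a uniform constraint over `σ`). -/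
theorem sucMC_dual_test {A B : Type*} [Fintype A] [DecidableEq A] [Nonempty A]
    [Fintype B] [DecidableEq B]
    (J : Matrix (A × B) (A × B) ℂ) (hJ : IsChoi J)
    (M : ℝ) (hM : 1 ≤ M) :
    sucMC J M = sSup {x | ∃ ρ : Matrix A A ℂ, ∃ O : Matrix (A × B) (A × B) ℂ,
      IsState ρ ∧ O.PosSemidef ∧
      ((1 : Matrix (A × B) (A × B) ℂ) - O).PosSemidef ∧
      (∀ σ : Matrix B B ℂ, IsState σ → ((ρ ⊗ₖ σ) * O).trace.re ≤ 1 / M) ∧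
      x = (((matRPow ρ (1/2) ⊗ₖ (1 : Matrix B B ℂ)) * J *
            (matRPow ρ (1/2) ⊗ₖ (1 : Matrix B B ℂ))) * O).trace.re} := by
  have hM0 : (0 : ℝ) < M := lt_of_lt_of_le one_pos hM
  have hMne : M ≠ 0 := ne_of_gt hM0
  unfold sucMC
  congr 1
  ext x
  constructor
  · rintro ⟨ρ, Λ, hρ, hΛ, hMΛ, htr, rfl⟩
    have hρp : ρ.PosSemidef := hρ.1
    set S : Matrix (A × B) (A × B) ℂ := matRPow ρ (1/2) ⊗ₖ (1 : Matrix B B ℂ) with hSdef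
    set N : Matrix (A × B) (A × B) ℂ := matRPow ρ (-(1/2)) ⊗ₖ (1 : Matrix B B ℂ) with hNdef
    set P : Matrix (A × B) (A × B) ℂ := projOf ρ ⊗ₖ (1 : Matrix B B ℂ) with hPdef
    have hNH : N.IsHermitian := kron_one_isHermitian (isqrt_isHermitian hρp)
    have hPH : P.IsHermitian := kron_one_isHermitian (projOf_isHermitian hρp)
    have hPΛP : P * Λ * P = Λ := by
      refine conj_proj_eq hΛ hMΛ hPH ?_
      rw [Matrix.smul_mul, hPdef, kron_rho_ann hρp, smul_zero]
    have hNΛN : (N * Λ * N).PosSemidef := by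
      have h := hΛ.mul_mul_conjTranspose_same N
      rwa [hNH.eq] at h
    set O : Matrix (A × B) (A × B) ℂ := ((M⁻¹ : ℝ) : ℂ) • (N * Λ * N) with hOdef
    have hSOS : S * O * S = ((M⁻¹ : ℝ) : ℂ) • Λ := by
      rw [hOdef, Matrix.mul_smul, Matrix.smul_mul]
      refine congrArg _ ?_
      calc S * (N * Λ * N) * S = (S * N) * Λ * (N * S) := by simp only [Matrix.mul_assoc]
        _ = Λ := by rw [hSdef, hNdef, kron_SN hρp, kron_NS hρp, ← hPdef, hPΛP]
    refine ⟨ρ, O, hρ, ?_, ?_, ?_, ?_⟩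
    · exact posSemidef_real_smul hNΛN (inv_nonneg.mpr hM0.le)
    · have hkey : P - O = ((M⁻¹ : ℝ) : ℂ) •
          (N * ((M : ℂ) • (ρ ⊗ₖ (1 : Matrix B B ℂ)) - Λ) * N) := by
        rw [Matrix.mul_sub, Matrix.sub_mul, smul_sub, hOdef]
        congr 1
        rw [Matrix.mul_smul, Matrix.smul_mul, smul_smul,
          show ((M⁻¹ : ℝ) : ℂ) * (M : ℂ) = 1 from by
            rw [← Complex.ofReal_mul, inv_mul_cancel₀ hMne, Complex.ofReal_one],
          one_smul, hNdef, kron_NrhoN hρp, ← hPdef]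
      have h1 : ((1 : Matrix (A × B) (A × B) ℂ) - P).PosSemidef := by
        rw [hPdef]; exact kron_one_sub_proj_psd hρp
      have h2 : (P - O).PosSemidef := by
        rw [hkey]
        refine posSemidef_real_smul ?_ (inv_nonneg.mpr hM0.le)
        have h := hMΛ.mul_mul_conjTranspose_same N
        rwa [hNH.eq] at h
      have h3 := h1.add h2
      rwa [sub_add_sub_cancel] at h3
    · intro σ hσ
      have e1 : ((ρ ⊗ₖ σ) * O).trace = ((M⁻¹ : ℝ) : ℂ) * (σ * trFst Λ).trace := by
        rw [← kron_factor hρp σ, ← hSdef, trace_sandwich, hSOS, Matrix.mul_smul, trace_smul,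
          smul_eq_mul, trace_one_kron_mul]
      rw [e1, Complex.re_ofReal_mul, one_div]
      have hb := trace_mul_le_one_of_one_sub hσ htr
      calc M⁻¹ * ((σ * trFst Λ).trace).re ≤ M⁻¹ * 1 :=
            mul_le_mul_of_nonneg_left hb (inv_nonneg.mpr hM0.le)
        _ = M⁻¹ := mul_one _
    · have e2 : ((S * J * S) * O).trace = ((M⁻¹ : ℝ) : ℂ) * (Λ * J).trace := by
        rw [trace_sandwich, hSOS, Matrix.mul_smul, trace_smul, smul_eq_mul, trace_mul_comm]
      rw [e2, Complex.re_ofReal_mul, one_div]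
  · rintro ⟨ρ, O, hρ, hO, hO1, hσc, rfl⟩
    have hρp : ρ.PosSemidef := hρ.1
    set S : Matrix (A × B) (A × B) ℂ := matRPow ρ (1/2) ⊗ₖ (1 : Matrix B B ℂ) with hSdef
    have hSH : S.IsHermitian := kron_one_isHermitian (sqrt_isHermitian hρp)
    set Λ : Matrix (A × B) (A × B) ℂ := (M : ℂ) • (S * O * S) with hΛdef
    have hSOSp : (S * O * S).PosSemidef := by
      have h := hO.mul_mul_conjTranspose_same S
      rwa [hSH.eq] at h
    have hΛpsd : Λ.PosSemidef := posSemidef_real_smul hSOSp hM0.le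
    refine ⟨ρ, Λ, hρ, hΛpsd, ?_, ?_, ?_⟩
    · have hkey : (M : ℂ) • (ρ ⊗ₖ (1 : Matrix B B ℂ)) - Λ
          = (M : ℂ) • (S * ((1 : Matrix (A × B) (A × B) ℂ) - O) * S) := by
        rw [hΛdef, ← smul_sub]
        congr 1
        rw [Matrix.mul_sub, Matrix.sub_mul, Matrix.mul_one, hSdef, kron_sq hρp]
      rw [hkey]
      refine posSemidef_real_smul ?_ hM0.le
      have h := hO1.mul_mul_conjTranspose_same S
      rwa [hSH.eq] at h
    · have hKpsd : (trFst Λ).PosSemidef := trFst_posSemidef hΛpsd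
      have hbound : ∀ σ : Matrix B B ℂ, IsState σ → ((σ * trFst Λ).trace).re ≤ 1 := by
        intro σ hσ
        have e1 : (σ * trFst Λ).trace = (M : ℂ) * ((ρ ⊗ₖ σ) * O).trace := by
          rw [← trace_one_kron_mul, hΛdef, Matrix.mul_smul, trace_smul, smul_eq_mul,
            ← trace_sandwich, hSdef, kron_factor hρp σ]
        rw [e1, Complex.re_ofReal_mul]
        have hc := hσc σ hσ
        calc M * (((ρ ⊗ₖ σ) * O).trace).re ≤ M * (1/M) :=
              mul_le_mul_of_nonneg_left hc hM0.le
          _ = 1 := by field_simp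
      have h := smul_one_sub_posSemidef hKpsd hbound
      rwa [Complex.ofReal_one, one_smul] at h
    · have e2 : (Λ * J).trace = (M : ℂ) * ((S * J * S) * O).trace := by
        rw [hΛdef, Matrix.smul_mul, trace_smul, smul_eq_mul, trace_sandwich, trace_mul_comm]
      rw [e2, Complex.re_ofReal_mul, one_div, inv_mul_cancel_left₀ hMne]


end QCoding
end

section
/- Let J be the Choi matrix of a quantum channel from a finite-dimensional system A to a finite-dimensional system B, let M ≥ 1 and g ≥ 1 be real numbers, and let ρ, ρ' be quantum states on R ≅ A with ρ ≼ g·ρ'. Then suc^NS(J, M, ρ) ≤ g · suc^NS(J, g·M, ρ'). -/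
open Matrix Kronecker Filter ComplexOrder

namespace QCoding

section Helpers

variable {n : Type*} [Fintype n] [DecidableEq n]

lemma psd_smul_nonneg {c : ℝ} (hc : 0 ≤ c) {M : Matrix n n ℂ} (hM : M.PosSemidef) :
    ((c : ℂ) • M).PosSemidef := by
  have h := hM.conjTranspose_mul_mul_same ((Real.sqrt c : ℂ) • (1 : Matrix n n ℂ))
  have he : (((Real.sqrt c : ℂ) • (1 : Matrix n n ℂ))ᴴ * M *
      ((Real.sqrt c : ℂ) • (1 : Matrix n n ℂ))) = (c : ℂ) • M := by
    simp [Matrix.conjTranspose_smul, Matrix.smul_mul, Matrix.mul_smul, smul_smul,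
      ← Complex.ofReal_mul, Real.mul_self_sqrt hc]
  rwa [he] at h

lemma psd_trace_re_nonneg_s9 {M : Matrix n n ℂ} (hM : M.PosSemidef) : 0 ≤ M.trace.re := by
  rw [Matrix.trace]
  simp only [Complex.re_sum]
  refine Finset.sum_nonneg fun i _ => ?_
  have h := hM.re_dotProduct_nonneg (Pi.single i 1)
  simpa [dotProduct, Matrix.mulVec, Pi.single_apply, Finset.mul_sum,
    mul_ite, ite_mul, Matrix.diag] using h

lemma psd_mul_trace_re_nonneg {M N : Matrix n n ℂ} (hM : M.PosSemidef)
    (hN : N.PosSemidef) : 0 ≤ (M * N).trace.re := by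
  obtain ⟨L, rfl⟩ := (by open scoped MatrixOrder in obtain ⟨L, hL⟩ := CStarAlgebra.nonneg_iff_eq_star_mul_self.mp hM.nonneg; exact ⟨L, by rw [hL, star_eq_conjTranspose]⟩ : ∃ L : Matrix n n ℂ, M = Lᴴ * L)
  have h1 : (Lᴴ * L * N).trace = (L * N * Lᴴ).trace := by
    rw [Matrix.mul_assoc, Matrix.trace_mul_comm, Matrix.mul_assoc]
  rw [h1]
  exact psd_trace_re_nonneg_s9 (hN.mul_mul_conjTranspose_same L)

end Helpers

section Helpers2

variable {A B : Type*} [Fintype A] [Fintype B] [DecidableEq A] [DecidableEq B]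

lemma kron_one_psd {ρ : Matrix A A ℂ} (h : ρ.PosSemidef) :
    (ρ ⊗ₖ (1 : Matrix B B ℂ)).PosSemidef := by
  obtain ⟨L, hL⟩ := (by open scoped MatrixOrder in obtain ⟨L, hL⟩ := CStarAlgebra.nonneg_iff_eq_star_mul_self.mp h.nonneg; exact ⟨L, by rw [hL, star_eq_conjTranspose]⟩ : ∃ L : Matrix A A ℂ, ρ = Lᴴ * L)
  have he : ρ ⊗ₖ (1 : Matrix B B ℂ) = (L ⊗ₖ (1 : Matrix B B ℂ))ᴴ * (L ⊗ₖ 1) := by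
    have h1 : (L ⊗ₖ (1 : Matrix B B ℂ))ᴴ = Lᴴ ⊗ₖ (1 : Matrix B B ℂ) := by
      ext ⟨a, b⟩ ⟨c, d⟩
      simp only [Matrix.conjTranspose_apply, Matrix.kroneckerMap_apply, Matrix.one_apply,
        star_mul', apply_ite, star_one, star_zero]
      split_ifs with h1 h2 <;> simp_all [eq_comm, mul_comm]
    rw [h1, ← Matrix.mul_kronecker_mul, Matrix.one_mul, ← hL]
  rw [he]
  exact Matrix.posSemidef_conjTranspose_mul_self _

lemma smul_kron_one (c : ℂ) (X : Matrix A A ℂ) :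
    (c • X) ⊗ₖ (1 : Matrix B B ℂ) = c • (X ⊗ₖ 1) := by
  ext ⟨a, b⟩ ⟨c', d⟩
  simp [Matrix.kroneckerMap_apply, mul_assoc]

lemma trFst_smul (c : ℂ) (Λ : Matrix (A × B) (A × B) ℂ) :
    trFst (c • Λ) = c • trFst Λ := by
  ext b b'
  simp [trFst, Finset.mul_sum]

lemma trFst_kron_one (ρ : Matrix A A ℂ) :
    trFst (ρ ⊗ₖ (1 : Matrix B B ℂ)) = ρ.trace • (1 : Matrix B B ℂ) := by
  ext b b'
  simp [trFst, Matrix.kroneckerMap_apply, Matrix.one_apply, Matrix.trace,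
    Matrix.diag, ← Finset.sum_mul, mul_ite]

end Helpers2

/-- Flattening of the input state of the fixed-input non-signaling
program: if `ρ ≼ g·ρ'` then `suc^NS(J, M, ρ) ≤ g · suc^NS(J, g·M, ρ')`. -/
theorem sucNSFixed_flatten {A B : Type*} [Fintype A] [DecidableEq A] [Nonempty A]
    [Fintype B] [DecidableEq B]
    (J : Matrix (A × B) (A × B) ℂ) (hJ : IsChoi J)
    (M g : ℝ) (hM : 1 ≤ M) (hg : 1 ≤ g)
    (ρ ρ' : Matrix A A ℂ) (hρ : IsState ρ) (hρ' : IsState ρ')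
    (hle : ((g : ℂ) • ρ' - ρ).PosSemidef) :
    sucNSFixed J M ρ ≤ g * sucNSFixed J (g * M) ρ' := by
  have hg0 : (0 : ℝ) < g := lt_of_lt_of_le one_pos hg
  have hM0 : (0 : ℝ) < M := lt_of_lt_of_le one_pos hM
  have hgM0 : (0 : ℝ) < g * M := mul_pos hg0 hM0
  set S' := {x | ∃ Λ : Matrix (A × B) (A × B) ℂ, Λ.PosSemidef ∧
    ((ρ' ⊗ₖ (1 : Matrix B B ℂ)) - Λ).PosSemidef ∧
    trFst Λ = ((1 / (g * M : ℝ) : ℂ)) • (1 : Matrix B B ℂ) ∧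
    x = (Λ * J).trace.re} with hS'
  -- bound above for S'
  have hbdd : BddAbove S' := by
    refine ⟨(((ρ' ⊗ₖ (1 : Matrix B B ℂ)) * J)).trace.re, ?_⟩
    rintro x ⟨Λ, hΛ, hΛle, hΛtr, rfl⟩
    have h := psd_mul_trace_re_nonneg hΛle hJ.1
    have he : (((ρ' ⊗ₖ (1 : Matrix B B ℂ)) - Λ) * J).trace
        = ((ρ' ⊗ₖ (1 : Matrix B B ℂ)) * J).trace - (Λ * J).trace := by
      rw [Matrix.sub_mul, Matrix.trace_sub]
    rw [he] at h
    simp only [Complex.sub_re] at h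
    linarith
  -- S' contains a nonnegative element
  have hc : (((1 / (g * M) : ℝ)) : ℂ) = 1 / ((g * M : ℝ) : ℂ) := by push_cast; ring
  have hone : 1 / (g * M) ≤ (1 : ℝ) := by
    rw [div_le_one hgM0]
    nlinarith
  have hpsd0 : ((1 / ((g * M : ℝ) : ℂ)) • (ρ' ⊗ₖ (1 : Matrix B B ℂ))).PosSemidef := by
    rw [← hc]
    exact psd_smul_nonneg (by positivity) (kron_one_psd hρ'.1)
  have hmem0 : (((1 / ((g * M : ℝ) : ℂ)) • (ρ' ⊗ₖ (1 : Matrix B B ℂ))) * J).trace.re ∈ S' := by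
    refine ⟨(1 / ((g * M : ℝ) : ℂ)) • (ρ' ⊗ₖ (1 : Matrix B B ℂ)), hpsd0, ?_, ?_, rfl⟩
    · have he : (ρ' ⊗ₖ (1 : Matrix B B ℂ)) - (1 / ((g * M : ℝ) : ℂ)) • (ρ' ⊗ₖ (1 : Matrix B B ℂ))
          = (((1 - 1 / (g * M)) : ℝ) : ℂ) • (ρ' ⊗ₖ (1 : Matrix B B ℂ)) := by
        rw [Complex.ofReal_sub, Complex.ofReal_one, sub_smul, one_smul, hc]
      rw [he]
      exact psd_smul_nonneg (by linarith) (kron_one_psd hρ'.1)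
    · rw [trFst_smul, trFst_kron_one, hρ'.2, one_smul]
  have hS'ne : S'.Nonempty := ⟨_, hmem0⟩
  have hx0 : 0 ≤ (((1 / ((g * M : ℝ) : ℂ)) • (ρ' ⊗ₖ (1 : Matrix B B ℂ))) * J).trace.re :=
    psd_mul_trace_re_nonneg hpsd0 hJ.1
  have hsup0 : 0 ≤ sSup S' := le_trans hx0 (le_csSup hbdd hmem0)
  -- reduce goal
  have hgoal : sucNSFixed J (g * M) ρ' = sSup S' := rfl
  rw [hgoal]
  refine Real.sSup_le ?_ (by positivity)
  rintro x ⟨Λ, hΛ, hΛle, hΛtr, rfl⟩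
  -- scaled operator
  set Λ' := ((g⁻¹ : ℝ) : ℂ) • Λ with hΛ'def
  have hΛ'psd : Λ'.PosSemidef := psd_smul_nonneg (by positivity) hΛ
  have hbig : (((g : ℂ) • (ρ' ⊗ₖ (1 : Matrix B B ℂ))) - Λ).PosSemidef := by
    have h1 : (((g : ℂ) • ρ' - ρ) ⊗ₖ (1 : Matrix B B ℂ)).PosSemidef := kron_one_psd hle
    have he : ((g : ℂ) • ρ' - ρ) ⊗ₖ (1 : Matrix B B ℂ)
        = (g : ℂ) • (ρ' ⊗ₖ (1 : Matrix B B ℂ)) - ρ ⊗ₖ (1 : Matrix B B ℂ) := by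
      rw [sub_kron_one, smul_kron_one]
    rw [he] at h1
    have := h1.add hΛle
    have he2 : ((g : ℂ) • (ρ' ⊗ₖ (1 : Matrix B B ℂ)) - ρ ⊗ₖ (1 : Matrix B B ℂ))
        + ((ρ ⊗ₖ (1 : Matrix B B ℂ)) - Λ)
        = ((g : ℂ) • (ρ' ⊗ₖ (1 : Matrix B B ℂ))) - Λ := sub_add_sub_cancel _ _ _
    rwa [he2] at this
  have hΛ'le : ((ρ' ⊗ₖ (1 : Matrix B B ℂ)) - Λ').PosSemidef := by
    have h := psd_smul_nonneg (c := g⁻¹) (by positivity) hbig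
    have he : ((g⁻¹ : ℝ) : ℂ) • (((g : ℂ) • (ρ' ⊗ₖ (1 : Matrix B B ℂ))) - Λ)
        = (ρ' ⊗ₖ (1 : Matrix B B ℂ)) - Λ' := by
      rw [hΛ'def, smul_sub, smul_smul, ← Complex.ofReal_mul, inv_mul_cancel₀ hg0.ne',
        Complex.ofReal_one, one_smul]
    rwa [he] at h
  have hΛ'tr : trFst Λ' = ((1 / (g * M : ℝ) : ℂ)) • (1 : Matrix B B ℂ) := by
    rw [hΛ'def, trFst_smul, hΛtr, smul_smul]
    congr 1
    have hgne : (g : ℂ) ≠ 0 := Complex.ofReal_ne_zero.mpr hg0.ne'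
    have hMne : (M : ℂ) ≠ 0 := Complex.ofReal_ne_zero.mpr hM0.ne'
    push_cast
    field_simp
  have hmem : ((Λ' * J)).trace.re ∈ S' := ⟨Λ', hΛ'psd, hΛ'le, hΛ'tr, rfl⟩
  have hle' : (Λ' * J).trace.re ≤ sSup S' := le_csSup hbdd hmem
  have hre : (Λ' * J).trace.re = g⁻¹ * (Λ * J).trace.re := by
    rw [hΛ'def, Matrix.smul_mul, Matrix.trace_smul]
    simp [Complex.ofReal_inv]
  rw [hre] at hle'
  calc (Λ * J).trace.re = g * (g⁻¹ * (Λ * J).trace.re) := by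
        field_simp
    _ ≤ g * sSup S' := by
        exact mul_le_mul_of_nonneg_left hle' hg0.le

end QCoding
end
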